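/- There exists a function f : ℝ → ℝ that is continuous everywhere but differentiable nowhere. -/

import Mathlib

open Finset

noncomputable def tg (y : ℝ) : ℝ := |y - round y|

noncomputable def tak (x : ℝ) : ℝ := ∑' n : ℕ, (1/2 : ℝ)^n * tg (2^n * x)

lemma tg_nonneg (y : ℝ) : 0 ≤ tg y := abs_nonneg _

lemma tg_le_half (y : ℝ) : tg y ≤ 1/2 := abs_sub_round y

lemma tg_int (k : ℤ) : tg (k : ℝ) = 0 := by
  simp [tg, round_intCast]

lemma tg_abs_sub (a b : ℝ) : |tg a - tg b| ≤ |a - b| := by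
  rw [abs_sub_le_iff]
  constructor
  · have h1 := round_le a (round b)
    have h2 := abs_sub_abs_le_abs_sub (a - round b) (b - round b)
    simp only [sub_sub_sub_cancel_right] at h2
    simp only [tg]; linarith
  · have h1 := round_le b (round a)
    have h2 := abs_sub_abs_le_abs_sub (b - round a) (a - round a)
    simp only [sub_sub_sub_cancel_right] at h2
    rw [abs_sub_comm b a] at h2
    simp only [tg]; linarith

lemma tg_lipschitz : LipschitzWith 1 tg := by
  apply LipschitzWith.of_dist_le_mul
  intro a b
  rw [Real.dist_eq, Real.dist_eq]
  push_cast
  rw [one_mul]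
  exact tg_abs_sub a b

lemma tg_continuous : Continuous tg := tg_lipschitz.continuous

noncomputable def sgn (j : ℤ) : ℝ := if Even j then 1 else -1

lemma abs_sgn (j : ℤ) : |sgn j| = 1 := by
  unfold sgn; split <;> simp

-- linearity of tg on [j/2, (j+1)/2]
lemma tg_eval_even (k : ℤ) (t : ℝ) (h1 : (k:ℝ) ≤ t) (h2 : t ≤ k + 1/2) :
    tg t = t - k := by
  rcases lt_or_eq_of_le h2 with h | h
  · have hr : round t = k := by
      rw [round_eq, Int.floor_eq_iff]
      constructor <;> push_cast <;> linarith
    rw [tg, hr, abs_of_nonneg (by linarith)]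
  · have hr : round t = k + 1 := by
      rw [round_eq, h]
      norm_num
      rw [show (k:ℝ) + 1/2 + 1/2 = ((k+1 : ℤ) : ℝ) by push_cast; ring, Int.floor_intCast]
    rw [tg, hr, h]
    push_cast
    rw [abs_of_nonpos (by linarith)]
    ring

lemma tg_eval_odd (k : ℤ) (t : ℝ) (h1 : (k:ℝ) + 1/2 ≤ t) (h2 : t ≤ k + 1) :
    tg t = (k + 1) - t := by
  have hr : round t = k + 1 := by
    rw [round_eq, Int.floor_eq_iff]
    constructor <;> push_cast <;> linarith
  rw [tg, hr]
  push_cast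
  rw [abs_of_nonpos (by linarith)]
  ring

lemma tg_slope (j : ℤ) (u v : ℝ) (hu1 : (j:ℝ)/2 ≤ u) (hu2 : u ≤ (j+1)/2)
    (hv1 : (j:ℝ)/2 ≤ v) (hv2 : v ≤ (j+1)/2) :
    tg v - tg u = sgn j * (v - u) := by
  rcases Int.even_or_odd j with ⟨k, hk⟩ | ⟨k, hk⟩
  · subst hk
    have e1 : tg u = u - k := tg_eval_even k u (by push_cast at hu1 ⊢; linarith) (by push_cast at hu2 ⊢; linarith)
    have e2 : tg v = v - k := tg_eval_even k v (by push_cast at hv1 ⊢; linarith) (by push_cast at hv2 ⊢; linarith)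
    rw [e1, e2, sgn, if_pos ⟨k, by ring⟩]
    ring
  · subst hk
    have e1 : tg u = (k+1) - u := tg_eval_odd k u (by push_cast at hu1 ⊢; linarith) (by push_cast at hu2 ⊢; linarith)
    have e2 : tg v = (k+1) - v := tg_eval_odd k v (by push_cast at hv1 ⊢; linarith) (by push_cast at hv2 ⊢; linarith)
    rw [e1, e2, sgn, if_neg (by rw [Int.even_add_one]; simp [parity_simps])]
    ring

lemma tak_summable (x : ℝ) : Summable (fun n : ℕ => (1/2:ℝ)^n * tg (2^n * x)) := by
  apply Summable.of_nonneg_of_le (fun n => mul_nonneg (by positivity) (tg_nonneg _))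
    (fun n => ?_) summable_geometric_two
  calc (1/2:ℝ)^n * tg (2^n * x) ≤ (1/2:ℝ)^n * (1/2) := by
        apply mul_le_mul_of_nonneg_left (tg_le_half _) (by positivity)
    _ ≤ (1/2)^n := by
        nlinarith [pow_nonneg (by norm_num : (0:ℝ) ≤ 1/2) n]

lemma tak_continuous : Continuous tak := by
  apply continuous_tsum (u := fun n => (1/2:ℝ)^n)
  · intro n
    exact continuous_const.mul (tg_continuous.comp (continuous_const.mul continuous_id))
  · exact summable_geometric_two
  · intro n x
    rw [Real.norm_eq_abs, abs_mul, abs_of_nonneg (by positivity), abs_of_nonneg (tg_nonneg _)]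
    calc (1/2:ℝ)^n * tg (2^n * x) ≤ (1/2:ℝ)^n * (1/2) :=
          mul_le_mul_of_nonneg_left (tg_le_half _) (by positivity)
      _ ≤ (1/2)^n := by nlinarith [pow_nonneg (by norm_num : (0:ℝ) ≤ 1/2) n]

lemma floor_dyadic (x : ℝ) (n m : ℕ) (h : n < m) :
    ((⌊2^(n+1)*x⌋ : ℤ) : ℝ) * 2^(m-n-1) ≤ (⌊2^m*x⌋ : ℤ) ∧
    ((⌊2^m*x⌋ : ℤ) : ℝ) + 1 ≤ ((⌊2^(n+1)*x⌋ : ℤ) + 1) * 2^(m-n-1) := by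
  have hm : m = (n+1) + (m-n-1) := by omega
  have hpow : (2:ℝ)^m = 2^(n+1) * 2^(m-n-1) := by rw [← pow_add]; congr 1
  constructor
  · have h1 : ((⌊2^(n+1)*x⌋ : ℤ) : ℝ) ≤ 2^(n+1)*x := Int.floor_le _
    have h2 : (⌊2^(n+1)*x⌋ * 2^(m-n-1) : ℤ) ≤ ⌊2^m*x⌋ := by
      apply Int.le_floor.2
      push_cast
      rw [hpow]
      nlinarith [pow_pos (by norm_num : (0:ℝ) < 2) (m-n-1)]
    exact_mod_cast h2
  · have h1 : 2^(n+1)*x < (⌊2^(n+1)*x⌋ : ℝ) + 1 := Int.lt_floor_add_one _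
    have h2 : ⌊2^m*x⌋ < (⌊2^(n+1)*x⌋ + 1) * 2^(m-n-1) := by
      apply Int.floor_lt.2
      push_cast
      rw [hpow]
      nlinarith [pow_pos (by norm_num : (0:ℝ) < 2) (m-n-1)]
    have := Int.add_one_le_of_lt h2
    exact_mod_cast this

lemma key (x : ℝ) (m : ℕ) :
    tak ((↑⌊2^m * x⌋ + 1) / 2^m) - tak (↑⌊2^m * x⌋ / 2^m)
      = (∑ n ∈ Finset.range m, sgn ⌊2^(n+1) * x⌋) / 2^m := by
  set b : ℤ := ⌊2^m * x⌋ with hb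
  set u : ℝ := (b:ℝ) / 2^m with hu
  set v : ℝ := ((b:ℝ) + 1) / 2^m with hv
  have h2m : (0:ℝ) < 2^m := by positivity
  rw [tak, tak, ← Summable.tsum_sub (tak_summable v) (tak_summable u)]
  rw [tsum_eq_sum (s := Finset.range m) ?_]
  · rw [Finset.sum_div]
    apply Finset.sum_congr rfl
    intro n hn
    have hnm : n < m := Finset.mem_range.1 hn
    obtain ⟨hA, hB⟩ := floor_dyadic x n m hnm
    set j : ℤ := ⌊2^(n+1)*x⌋ with hj
    have hm : m = (n+1) + (m-n-1) := by omega
    have hpow : (2:ℝ)^m = 2^n * (2 * 2^(m-n-1)) := by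
      rw [show 2^n * (2 * 2^(m-n-1)) = (2:ℝ)^(n + 1 + (m-n-1)) by rw [pow_add, pow_succ]; ring]
      congr 1
    have h2n : (0:ℝ) < 2^n := by positivity
    have hP : (0:ℝ) < 2^(m-n-1) := by positivity
    have hru : 2^n * u = (b:ℝ) / (2 * 2^(m-n-1)) := by
      rw [hu, hpow]; field_simp
    have hrv : 2^n * v = ((b:ℝ)+1) / (2 * 2^(m-n-1)) := by
      rw [hv, hpow]; field_simp
    have hu1 : (j:ℝ)/2 ≤ 2^n * u := by
      rw [hru, div_le_div_iff₀ (by norm_num) (by positivity)]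
      nlinarith
    have hv2 : 2^n * v ≤ ((j:ℝ)+1)/2 := by
      rw [hrv, div_le_div_iff₀ (by positivity) (by norm_num)]
      nlinarith
    have huv' : 2^n * u ≤ 2^n * v := by
      rw [hru, hrv]
      gcongr
      linarith
    have := tg_slope j (2^n * u) (2^n * v) hu1 (le_trans huv' hv2)
      (le_trans hu1 huv') hv2
    have hslope : tg (2^n*v) - tg (2^n*u) = sgn j * (2^n * (v - u)) := by
      push_cast at this ⊢
      rw [this]; ring
    have hvu : v - u = 1 / 2^m := by rw [hu, hv]; field_simp; ring
    rw [← mul_sub, hslope, hvu]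
    field_simp
    rw [mul_right_comm, ← mul_pow]; norm_num
  · intro n hn
    have hnm : m ≤ n := by simp [Finset.mem_range] at hn; omega
    have hpq : (2:ℝ)^n = 2^m * 2^(n-m) := by rw [← pow_add]; congr 1; omega
    have hiu : 2^n * u = ((b * 2^(n-m) : ℤ) : ℝ) := by
      rw [hu, hpq]; push_cast; field_simp
    have hiv : 2^n * v = (((b+1) * 2^(n-m) : ℤ) : ℝ) := by
      rw [hv, hpq]; push_cast; field_simp
    rw [hiu, hiv, tg_int, tg_int]
    ring

theorem continuous_nowhere_differentiable :
    ∃ f : ℝ → ℝ, Continuous f ∧ ∀ x : ℝ, ¬ DifferentiableAt ℝ f x := by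
  refine ⟨tak, tak_continuous, fun x hdiff => ?_⟩
  obtain ⟨L, hd⟩ : ∃ L, HasDerivAt tak L x := ⟨deriv tak x, hdiff.hasDerivAt⟩
  rw [hasDerivAt_iff_isLittleO] at hd
  have h8 := hd.def (by norm_num : (0:ℝ) < 1/8)
  rw [Metric.eventually_nhds_iff] at h8
  obtain ⟨δ, hδ, hball⟩ := h8
  set S : ℕ → ℝ := fun m => ∑ n ∈ Finset.range m, sgn ⌊2^(n+1) * x⌋ with hS
  have claim : ∀ m : ℕ, 1/2^m < δ → |S m - L| ≤ 1/4 := by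
    intro m hm
    set b : ℤ := ⌊2^m * x⌋ with hb
    set u : ℝ := (b:ℝ) / 2^m with hu'
    set v : ℝ := ((b:ℝ) + 1) / 2^m with hv'
    have h2m : (0:ℝ) < 2^m := by positivity
    have hbl : (b:ℝ) ≤ 2^m * x := Int.floor_le _
    have hbu : 2^m * x < (b:ℝ) + 1 := Int.lt_floor_add_one _
    have hux : u ≤ x := by rw [hu', div_le_iff₀ h2m]; linarith
    have hxv : x < v := by rw [hv', lt_div_iff₀ h2m]; linarith
    have hvu : v - u = 1/2^m := by rw [hu', hv']; field_simp; ring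
    have hvu0 : 0 < v - u := by rw [hvu]; positivity
    have hdu : dist u x < δ := by
      rw [Real.dist_eq, abs_of_nonpos (by linarith)]
      have h : x - u ≤ v - u := by linarith
      rw [hvu] at h; linarith
    have hdv : dist v x < δ := by
      rw [Real.dist_eq, abs_of_nonneg (by linarith)]
      have h : v - x ≤ v - u := by linarith
      rw [hvu] at h; linarith
    have h1 := hball hdu
    have h2 := hball hdv
    simp only [Real.norm_eq_abs, smul_eq_mul] at h1 h2
    have hkey : tak v - tak u = S m * (v - u) := by
      rw [hu', hv', key x m, hvu]
      simp [hS]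
      ring
    have habs : |S m * (v - u) - L * (v - u)| ≤ 1/4 * (v - u) := by
      have e : S m * (v - u) - L * (v - u)
          = (tak v - tak x - (v - x) * L) - (tak u - tak x - (u - x) * L) := by
        rw [← hkey]; ring
      rw [e]
      have b1 : |tak v - tak x - (v - x) * L| ≤ 1/8 * (v - u) := by
        refine le_trans h2 ?_
        have : |v - x| ≤ v - u := by rw [abs_of_nonneg (by linarith)]; linarith
        nlinarith
      have b2 : |tak u - tak x - (u - x) * L| ≤ 1/8 * (v - u) := by
        refine le_trans h1 ?_
        have : |u - x| ≤ v - u := by rw [abs_of_nonpos (by linarith)]; linarith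
        nlinarith
      calc |(tak v - tak x - (v - x) * L) - (tak u - tak x - (u - x) * L)|
          ≤ |tak v - tak x - (v - x) * L| + |tak u - tak x - (u - x) * L| := abs_sub _ _
        _ ≤ 1/4 * (v - u) := by linarith
    have h3 : |S m - L| * (v - u) ≤ 1/4 * (v - u) := by
      have e2 : S m * (v - u) - L * (v - u) = (S m - L) * (v - u) := by ring
      rw [e2, abs_mul, abs_of_pos hvu0] at habs
      exact habs
    nlinarith
  obtain ⟨m, hm⟩ : ∃ m : ℕ, (1/2:ℝ)^m < δ :=
    exists_pow_lt_of_lt_one hδ (by norm_num)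
  have hm' : (1:ℝ)/2^m < δ := by rwa [div_pow, one_pow] at hm
  have hm1 : (1:ℝ)/2^(m+1) < δ := by
    have : (1:ℝ)/2^(m+1) ≤ 1/2^m := by
      apply div_le_div_of_nonneg_left one_pos.le (by positivity)
      exact pow_le_pow_right₀ (by norm_num) (by omega)
    linarith
  have c1 := claim m hm'
  have c2 := claim (m+1) hm1
  have hdiffS : |S (m+1) - S m| = 1 := by
    have : S (m+1) - S m = sgn ⌊2^(m+1) * x⌋ := by
      simp [hS, Finset.sum_range_succ]
    rw [this, abs_sgn]
  have : |S (m+1) - S m| ≤ 1/2 := by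
    calc |S (m+1) - S m| = |(S (m+1) - L) - (S m - L)| := by ring_nf
      _ ≤ |S (m+1) - L| + |S m - L| := abs_sub _ _
      _ ≤ 1/2 := by linarith
  rw [hdiffS] at this
  linarith
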